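/- Let p : ℝ^d → (0,∞) be C¹ and let w : ℝ^d → ℝ be C¹ with ∫_{ℝ^d} w² p dx < ∞ and ∫_{ℝ^d} |∇w|² p dx < ∞. Suppose that ∫_{ℝ^d} ∇ψ(x) · ∇w(x) p(x) dx = 0 for every continuously differentiable ψ : ℝ^d → ℝ with compact support, and that there is a constant C > 0 with ( ∫ w² p dx )^{1/2} ≤ C ( ∫ |∇w|² p dx )^{1/2}. Then w ≡ 0 on ℝ^d. -/

import Mathlib

open MeasureTheory Metric Filter
open scoped RealInnerProductSpace Topology

private lemma inner_gradient_eq {d : ℕ} (f : EuclideanSpace ℝ (Fin d) → ℝ)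
    (x v : EuclideanSpace ℝ (Fin d)) : ⟪gradient f x, v⟫ = fderiv ℝ f x v := by
  rw [gradient, InnerProductSpace.toDual_symm_apply]

set_option maxHeartbeats 1000000 in
theorem stmt15 {d : ℕ}
    (p : EuclideanSpace ℝ (Fin d) → ℝ) (hp : ContDiff ℝ 1 p) (hppos : ∀ x, 0 < p x)
    (w : EuclideanSpace ℝ (Fin d) → ℝ) (hw : ContDiff ℝ 1 w)
    (hw2 : Integrable (fun x => (w x) ^ 2 * p x))
    (hgw2 : Integrable (fun x => ‖gradient w x‖ ^ 2 * p x))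
    (horth : ∀ ψ : EuclideanSpace ℝ (Fin d) → ℝ,
      ContDiff ℝ 1 ψ → HasCompactSupport ψ →
      ∫ x, ⟪gradient ψ x, gradient w x⟫ * p x = 0)
    (C : ℝ) (hC : 0 < C)
    (hPoin : (∫ x, (w x) ^ 2 * p x) ^ ((1 : ℝ) / 2)
      ≤ C * (∫ x, ‖gradient w x‖ ^ 2 * p x) ^ ((1 : ℝ) / 2)) :
    ∀ x, w x = 0 := by
  -- continuity facts
  have hpc : Continuous p := hp.continuous
  have hwc : Continuous w := hw.continuous
  have hgwc : Continuous (gradient w) :=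
    (InnerProductSpace.toDual ℝ (EuclideanSpace ℝ (Fin d))).symm.continuous.comp
      (hw.continuous_fderiv one_ne_zero)
  have hwd : Differentiable ℝ w := hw.differentiable one_ne_zero
  have hnn : ∀ x, (0:ℝ) ≤ ‖gradient w x‖ ^ 2 * p x :=
    fun x => mul_nonneg (by positivity) (hppos x).le
  have hnn' : ∀ x, (0:ℝ) ≤ (w x) ^ 2 * p x :=
    fun x => mul_nonneg (by positivity) (hppos x).le
  -- the bump function
  set φ : ContDiffBump (0 : EuclideanSpace ℝ (Fin d)) := ⟨1, 2, one_pos, one_lt_two⟩ with hφ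
  have hφ1 : ContDiff ℝ 1 (φ : EuclideanSpace ℝ (Fin d) → ℝ) := φ.contDiff
  have hφK : ∃ K, ∀ x, ‖fderiv ℝ (φ : EuclideanSpace ℝ (Fin d) → ℝ) x‖ ≤ K :=
    (φ.hasCompactSupport.fderiv (𝕜 := ℝ)).exists_bound_of_continuous (hφ1.continuous_fderiv one_ne_zero)
  obtain ⟨K, hK⟩ := hφK
  have hK0 : 0 ≤ K := le_trans (norm_nonneg _) (hK 0)
  -- scaled cutoffs
  set L : ℕ → EuclideanSpace ℝ (Fin d) →L[ℝ] EuclideanSpace ℝ (Fin d) :=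
    fun n => (((n : ℝ) + 1)⁻¹) • ContinuousLinearMap.id ℝ (EuclideanSpace ℝ (Fin d)) with hL
  set χ : ℕ → EuclideanSpace ℝ (Fin d) → ℝ := fun n x => φ (L n x) with hχ
  have hLapp : ∀ n x, L n x = (((n : ℝ) + 1)⁻¹) • x := fun n x => rfl
  have hn1pos : ∀ n : ℕ, (0:ℝ) < (n : ℝ) + 1 := fun n => by positivity
  have hχdiff : ∀ n, ContDiff ℝ 1 (χ n) := fun n => hφ1.comp (L n).contDiff
  have hχ01 : ∀ n x, 0 ≤ χ n x ∧ χ n x ≤ 1 := fun n x => ⟨φ.nonneg, φ.le_one⟩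
  have hχcs : ∀ n, HasCompactSupport (χ n) := by
    intro n
    apply HasCompactSupport.intro
      (isCompact_closedBall (0 : EuclideanSpace ℝ (Fin d)) (2 * ((n : ℝ) + 1)))
    intro x hx
    apply φ.zero_of_le_dist
    simp only [mem_closedBall, dist_zero_right, not_le] at hx
    rw [hLapp, dist_zero_right, norm_smul, norm_inv]
    show φ.rOut ≤ ‖(n:ℝ)+1‖⁻¹ * ‖x‖
    have h2 : φ.rOut = 2 := rfl
    rw [h2, Real.norm_of_nonneg (hn1pos n).le, inv_mul_eq_div, le_div_iff₀ (hn1pos n)]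
    linarith
  -- derivative of cutoffs
  have hχfderiv : ∀ n x, fderiv ℝ (χ n) x
      = (fderiv ℝ (φ : EuclideanSpace ℝ (Fin d) → ℝ) (L n x)).comp (L n) := by
    intro n x
    have h := fderiv_comp x ((hφ1.differentiable one_ne_zero).differentiableAt)
      (L n).differentiableAt
    rw [(L n).fderiv] at h
    exact h
  have hχbound : ∀ n x v, |fderiv ℝ (χ n) x v| ≤ K * (((n : ℝ) + 1)⁻¹ * ‖v‖) := by
    intro n x v
    rw [hχfderiv]
    calc |fderiv ℝ (φ : EuclideanSpace ℝ (Fin d) → ℝ) (L n x) (L n v)|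
        ≤ ‖fderiv ℝ (φ : EuclideanSpace ℝ (Fin d) → ℝ) (L n x)‖ * ‖L n v‖ :=
          (fderiv ℝ (φ : EuclideanSpace ℝ (Fin d) → ℝ) (L n x)).le_opNorm _
      _ ≤ K * (((n : ℝ) + 1)⁻¹ * ‖v‖) := by
          apply mul_le_mul (hK _) ?_ (norm_nonneg _) hK0
          rw [hLapp, norm_smul, norm_inv, Real.norm_of_nonneg (hn1pos n).le]
  -- test functions
  set ψ : ℕ → EuclideanSpace ℝ (Fin d) → ℝ := fun n x => χ n x * w x with hψ
  have hψdiff : ∀ n, ContDiff ℝ 1 (ψ n) := fun n => (hχdiff n).mul hw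
  have hψcs : ∀ n, HasCompactSupport (ψ n) := fun n => (hχcs n).mul_right
  -- key pointwise identity
  have hkey : ∀ n x, ⟪gradient (ψ n) x, gradient w x⟫ * p x
      = (χ n x * (‖gradient w x‖ ^ 2 * p x))
        + (w x * fderiv ℝ (χ n) x (gradient w x)) * p x := by
    intro n x
    rw [inner_gradient_eq]
    have hfd : fderiv ℝ (ψ n) x = χ n x • fderiv ℝ w x + w x • fderiv ℝ (χ n) x :=
      fderiv_mul (((hχdiff n).differentiable one_ne_zero).differentiableAt (x := x))
        (hwd.differentiableAt (x := x))
    have hfw : fderiv ℝ w x (gradient w x) = ‖gradient w x‖ ^ 2 := by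
      rw [← inner_gradient_eq, real_inner_self_eq_norm_sq]
    rw [hfd]
    simp only [ContinuousLinearMap.add_apply, ContinuousLinearMap.smul_apply, smul_eq_mul, hfw]
    ring
  -- integrability of the two pieces
  have hmeas1 : ∀ n, AEStronglyMeasurable
      (fun x => χ n x * (‖gradient w x‖ ^ 2 * p x)) volume := by
    intro n
    exact (((hχdiff n).continuous).mul (((hgwc.norm.pow 2)).mul hpc)).aestronglyMeasurable
  have hint1 : ∀ n, Integrable (fun x => χ n x * (‖gradient w x‖ ^ 2 * p x)) := by
    intro n
    apply hgw2.mono (hmeas1 n)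
    filter_upwards with x
    rw [Real.norm_eq_abs, Real.norm_eq_abs, abs_mul]
    have h1 := (hχ01 n x).1; have h2 := (hχ01 n x).2
    rw [abs_of_nonneg h1, abs_of_nonneg (hnn x)]
    nlinarith [hnn x]
  have hcont2 : ∀ n, Continuous (fun x => (w x * fderiv ℝ (χ n) x (gradient w x)) * p x) := by
    intro n
    apply Continuous.mul ?_ hpc
    apply hwc.mul
    exact (((hχdiff n).continuous_fderiv one_ne_zero)).clm_apply hgwc
  have hdom2 : ∀ n x, |(w x * fderiv ℝ (χ n) x (gradient w x)) * p x|
      ≤ (K * ((n : ℝ) + 1)⁻¹) * ((1/2) * ((w x)^2 * p x + ‖gradient w x‖^2 * p x)) := by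
    intro n x
    have hpx := (hppos x).le
    have hinv : (0:ℝ) ≤ ((n : ℝ) + 1)⁻¹ := (inv_pos.2 (hn1pos n)).le
    rw [abs_mul, abs_mul, abs_of_nonneg hpx]
    have h1 : |w x| * |fderiv ℝ (χ n) x (gradient w x)|
        ≤ |w x| * (K * (((n : ℝ) + 1)⁻¹ * ‖gradient w x‖)) :=
      mul_le_mul_of_nonneg_left (hχbound n x _) (abs_nonneg _)
    have h2 : |w x| * ‖gradient w x‖ ≤ (1/2) * ((w x)^2 + ‖gradient w x‖^2) := by
      nlinarith [sq_nonneg (|w x| - ‖gradient w x‖), sq_abs (w x)]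
    nlinarith [abs_nonneg (w x), norm_nonneg (gradient w x),
      mul_le_mul_of_nonneg_right h1 hpx, mul_le_mul_of_nonneg_right h2 hpx,
      mul_nonneg (mul_nonneg hK0 hinv) hpx]
  have hintdom : Integrable (fun x => (w x)^2 * p x + ‖gradient w x‖^2 * p x) := hw2.add hgw2
  have hint2 : ∀ n, Integrable (fun x => (w x * fderiv ℝ (χ n) x (gradient w x)) * p x) := by
    intro n
    apply (((hintdom.const_mul ((1:ℝ)/2)).const_mul (K * ((n : ℝ) + 1)⁻¹))).mono
      (hcont2 n).aestronglyMeasurable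
    filter_upwards with x
    rw [Real.norm_eq_abs, Real.norm_eq_abs]
    exact le_trans (hdom2 n x) (le_abs_self _)
  -- the orthogonality relation split
  have hsplit : ∀ n, (∫ x, χ n x * (‖gradient w x‖ ^ 2 * p x))
      + ∫ x, (w x * fderiv ℝ (χ n) x (gradient w x)) * p x = 0 := by
    intro n
    rw [← integral_add (hint1 n) (hint2 n)]
    rw [← horth (ψ n) (hψdiff n) (hψcs n)]
    congr 1; ext x; rw [hkey n x]
  -- first integral tends to ∫ ‖∇w‖² p
  have hA : Tendsto (fun n => ∫ x, χ n x * (‖gradient w x‖ ^ 2 * p x)) atTop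
      (𝓝 (∫ x, ‖gradient w x‖ ^ 2 * p x)) := by
    apply tendsto_integral_of_dominated_convergence (fun x => ‖gradient w x‖ ^ 2 * p x)
      (fun n => hmeas1 n) hgw2
    · intro n
      filter_upwards with x
      rw [Real.norm_eq_abs, abs_mul, abs_of_nonneg (hχ01 n x).1, abs_of_nonneg (hnn x)]
      nlinarith [(hχ01 n x).2, hnn x]
    · filter_upwards with x
      apply Tendsto.congr' ?_ tendsto_const_nhds
      filter_upwards [eventually_ge_atTop (Nat.ceil ‖x‖)] with n hn
      have hxn : ‖x‖ ≤ (n : ℝ) + 1 := by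
        have h' : ‖x‖ ≤ (n : ℝ) := le_trans (Nat.le_ceil _) (by exact_mod_cast hn)
        linarith
      have hone : χ n x = 1 := by
        apply φ.one_of_mem_closedBall
        rw [hLapp, mem_closedBall, dist_zero_right, norm_smul, norm_inv]
        show ‖(n:ℝ)+1‖⁻¹ * ‖x‖ ≤ φ.rIn
        have h1 : φ.rIn = 1 := rfl
        rw [h1, Real.norm_of_nonneg (hn1pos n).le, inv_mul_eq_div, div_le_one (hn1pos n)]
        exact hxn
      rw [hone, one_mul]
  -- second integral tends to 0
  have hB : Tendsto (fun n => ∫ x, (w x * fderiv ℝ (χ n) x (gradient w x)) * p x) atTop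
      (𝓝 0) := by
    have hM : ∀ n : ℕ, |∫ x, (w x * fderiv ℝ (χ n) x (gradient w x)) * p x|
        ≤ (K * ((n : ℝ) + 1)⁻¹) * ((1/2) * ∫ x, ((w x)^2 * p x + ‖gradient w x‖^2 * p x)) := by
      intro n
      calc |∫ x, (w x * fderiv ℝ (χ n) x (gradient w x)) * p x|
          ≤ ∫ x, |(w x * fderiv ℝ (χ n) x (gradient w x)) * p x| := by
            rw [← Real.norm_eq_abs]
            refine le_trans (norm_integral_le_integral_norm _) (le_of_eq ?_)
            simp only [Real.norm_eq_abs]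
        _ ≤ ∫ x, (K * ((n : ℝ) + 1)⁻¹) * ((1/2) * ((w x)^2 * p x + ‖gradient w x‖^2 * p x)) := by
            apply integral_mono ((hint2 n).abs) (((hintdom.const_mul _).const_mul _))
            intro x; exact hdom2 n x
        _ = (K * ((n : ℝ) + 1)⁻¹) * ((1/2) * ∫ x, ((w x)^2 * p x + ‖gradient w x‖^2 * p x)) := by
            rw [integral_const_mul, integral_const_mul]
    have hlim : Tendsto (fun n : ℕ => (K * ((n : ℝ) + 1)⁻¹) *
        ((1/2) * ∫ x, ((w x)^2 * p x + ‖gradient w x‖^2 * p x))) atTop (𝓝 0) := by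
      have h1 : Tendsto (fun n : ℕ => ((n : ℝ) + 1)⁻¹) atTop (𝓝 0) := by
        apply tendsto_inv_atTop_zero.comp
        exact tendsto_atTop_add_const_right _ 1 tendsto_natCast_atTop_atTop
      have := (h1.const_mul K).mul_const
        ((1/2) * ∫ x, ((w x)^2 * p x + ‖gradient w x‖^2 * p x))
      simpa using this
    apply squeeze_zero_norm ?_ hlim
    intro n
    rw [Real.norm_eq_abs]
    exact hM n
  -- conclude ∫ ‖∇w‖² p = 0
  have hgzero : (∫ x, ‖gradient w x‖ ^ 2 * p x) = 0 := by
    have h1 : Tendsto (fun n => ∫ x, χ n x * (‖gradient w x‖ ^ 2 * p x)) atTop (𝓝 0) := by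
      have heq : (fun n => ∫ x, χ n x * (‖gradient w x‖ ^ 2 * p x))
          = fun n => -(∫ x, (w x * fderiv ℝ (χ n) x (gradient w x)) * p x) := by
        ext n; linarith [hsplit n]
      rw [heq]
      simpa using hB.neg
    exact tendsto_nhds_unique hA h1
  -- Poincaré gives ∫ w² p = 0
  have hwzero : (∫ x, (w x) ^ 2 * p x) = 0 := by
    rw [hgzero, Real.zero_rpow (by norm_num : (1:ℝ)/2 ≠ 0), mul_zero] at hPoin
    by_contra h
    have hpos : 0 < ∫ x, (w x) ^ 2 * p x := by
      rcases lt_or_eq_of_le (integral_nonneg (f := fun x => (w x) ^ 2 * p x) hnn') with h' | h'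
      · exact h'
      · exact absurd h'.symm h
    exact absurd hPoin (not_le.2 (Real.rpow_pos_of_pos hpos _))
  -- conclude pointwise
  have haezero : (fun x => (w x) ^ 2 * p x) =ᵐ[volume] 0 := by
    rw [← integral_eq_zero_iff_of_nonneg hnn' hw2]
    exact hwzero
  have hzero : (fun x => (w x) ^ 2 * p x) = fun _ => 0 := by
    have hcont : Continuous (fun x => (w x) ^ 2 * p x) := ((hwc.pow 2).mul hpc)
    exact hcont.ae_eq_iff_eq volume continuous_const |>.mp haezero
  intro x
  have hx0 := congrFun hzero x
  change (w x) ^ 2 * p x = 0 at hx0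
  have hw0 : (w x) ^ 2 = 0 := by
    rcases mul_eq_zero.mp hx0 with h | h
    · exact h
    · exact absurd h (hppos x).ne'
  exact pow_eq_zero_iff (by norm_num) |>.mp hw0
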